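/- Let π be a linear order on Σ and π^R its reversal (a <_{π^R} b iff b <_π a), and let s be a primitive string of length n over Σ sorted by a context adaptive ordering in which π_x ∈ {π, π^R} for every string x (a ± ordering). Let z be a string and x₁ ∈ Σ with |z| + 1 < n. Let u and v be rotations of s that both have prefix z, both end with x₁, and whose symbols at position |z| + 1 differ; let u' and v' be their right shifts (which both have prefix x₁·z). If π_{x₁z} = π_z then u ≺ v if and only if u' ≺ v'; if π_{x₁z} = (π_z)^R then u ≺ v if and only if v' ≺ u'. -/

import Mathlib

open scoped Classical

variable {A : Type*}

/-- Longest common prefix of two lists. -/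
def lcp [DecidableEq A] : List A → List A → List A
  | a :: as, b :: bs => if a = b then a :: lcp as bs else []
  | _, _ => []

/-- A string is primitive if its cyclic rotations are pairwise distinct. -/
def Primitive (s : List A) : Prop :=
  ∀ i j, i < s.length → j < s.length → s.rotate i = s.rotate j → i = j

/-- The context-adaptive comparison relation on rotations. -/
def Prec [DecidableEq A] (P : List A → A → A → Prop) (u v : List A) : Prop :=
  ∃ a b, u[(lcp u v).length]? = some a ∧ v[(lcp u v).length]? = some b ∧
    P (lcp u v) a b

/-- The index of the right shift of the rotation `R_i` of a string of length
`n`, i.e. `(i - 1) mod n`. -/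
def rshift (n i : ℕ) : ℕ := (i + n - 1) % n

lemma lcp_of_ne [DecidableEq A] (z : List A) (a b : A) (u v : List A) (hab : a ≠ b) :
    lcp (z ++ a :: u) (z ++ b :: v) = z := by
  induction z with
  | nil => simp [lcp, hab]
  | cons c z ih => simp [lcp, ih]

lemma prec_iff [DecidableEq A] (P : List A → A → A → Prop) (z : List A) (a b : A)
    (hab : a ≠ b) (u v : List A) (hu : z ++ [a] <+: u) (hv : z ++ [b] <+: v) :
    Prec P u v ↔ P z a b := by
  obtain ⟨u₁, rfl⟩ := hu
  obtain ⟨v₁, rfl⟩ := hv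
  have h1 : z ++ [a] ++ u₁ = z ++ a :: u₁ := by simp
  have h2 : z ++ [b] ++ v₁ = z ++ b :: v₁ := by simp
  rw [h1, h2]
  have hl := lcp_of_ne z a b u₁ v₁ hab
  have ha : (z ++ a :: u₁)[z.length]? = some a := by
    rw [List.getElem?_append_right le_rfl]; simp
  have hb : (z ++ b :: v₁)[z.length]? = some b := by
    rw [List.getElem?_append_right le_rfl]; simp
  constructor
  · rintro ⟨a', b', ha', hb', hP⟩
    rw [hl] at ha' hb' hP
    rw [ha] at ha'; rw [hb] at hb'
    obtain rfl := Option.some_injective _ ha'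
    obtain rfl := Option.some_injective _ hb'
    exact hP
  · intro hP
    exact ⟨a, b, by rw [hl]; exact ha, by rw [hl]; exact hb, by rw [hl]; exact hP⟩

lemma prefix_snoc_of_getElem [DecidableEq A] {z u : List A} {a : A}
    (hz : z <+: u) (ha : u[z.length]? = some a) : z ++ [a] <+: u := by
  have hlen : z.length < u.length := by
    by_contra h
    rw [List.getElem?_eq_none (le_of_not_gt h)] at ha
    simp at ha
  have htake : z = u.take z.length := List.prefix_iff_eq_take.mp hz
  have ha' : u[z.length] = a := by
    rw [List.getElem?_eq_getElem hlen] at ha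
    exact Option.some_injective _ ha
  have : u = z ++ a :: u.drop (z.length + 1) := by
    conv_lhs => rw [← List.take_append_drop z.length u]
    rw [← htake, List.drop_eq_getElem_cons hlen, ha']
  rw [this]
  exact ⟨u.drop (z.length + 1), by simp⟩

lemma rotate_pred (u : List A) (h : u ≠ []) :
    u.rotate (u.length - 1) = u.getLast h :: u.dropLast := by
  have h2 := List.rotate_append_length_eq u.dropLast [u.getLast h]
  rw [List.dropLast_append_getLast h, List.length_dropLast] at h2
  rw [h2]
  rfl

lemma rotate_rshift (s : List A) (hs : 1 ≤ s.length) (i : ℕ) (h : (s.rotate i) ≠ []) :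
    s.rotate ((i + s.length - 1) % s.length)
      = (s.rotate i).getLast h :: (s.rotate i).dropLast := by
  rw [List.rotate_mod]
  have harith : i + s.length - 1 = i + (s.length - 1) := by omega
  rw [harith, ← List.rotate_rotate]
  have h2 := rotate_pred (s.rotate i) h
  rw [List.length_rotate] at h2
  exact h2

/-- ± orderings.  Fix a linear order `π` on `Σ` and a context
adaptive ordering `P` with `P x ∈ {π, π^R}` for every `x`.  Let `u = R_i`,
`v = R_j` be rotations that both have prefix `z`, both end with `x₁`, and whose
symbols at position `|z|+1` differ; let `u'`, `v'` be their right shifts.  If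
`P (x₁·z) = P z` then `u ≺ v ↔ u' ≺ v'`; if `P (x₁·z) = (P z)^R` then
`u ≺ v ↔ v' ≺ u'`. -/
theorem stmt13 [Fintype A] [DecidableEq A]
    (π : A → A → Prop) (hπ : IsStrictTotalOrder A π)
    (P : List A → A → A → Prop)
    (hpm : ∀ x : List A, P x = π ∨ P x = fun a b => π b a)
    (s : List A) (hs : 1 ≤ s.length) (hprim : Primitive s)
    (z : List A) (x₁ : A) (hzn : z.length + 1 < s.length)
    (i j : ℕ) (hi : i < s.length) (hj : j < s.length)
    (hzi : z <+: s.rotate i) (hzj : z <+: s.rotate j)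
    (hli : (s.rotate i).getLast? = some x₁)
    (hlj : (s.rotate j).getLast? = some x₁)
    (hdiff : ∃ a b, (s.rotate i)[z.length]? = some a ∧
      (s.rotate j)[z.length]? = some b ∧ a ≠ b) :
    (P (x₁ :: z) = P z →
      (Prec P (s.rotate i) (s.rotate j) ↔
        Prec P (s.rotate (rshift s.length i)) (s.rotate (rshift s.length j)))) ∧
    ((P (x₁ :: z) = fun a b => P z b a) →
      (Prec P (s.rotate i) (s.rotate j) ↔
        Prec P (s.rotate (rshift s.length j)) (s.rotate (rshift s.length i)))) := by
  obtain ⟨a, b, ha, hb, hab⟩ := hdiff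
  have hne : ∀ k : ℕ, s.rotate k ≠ [] := by
    intro k h
    have := congrArg List.length h
    rw [List.length_rotate, List.length_nil] at this
    omega
  have hui : z ++ [a] <+: s.rotate i := prefix_snoc_of_getElem hzi ha
  have hvj : z ++ [b] <+: s.rotate j := prefix_snoc_of_getElem hzj hb
  have hshift : ∀ (k : ℕ), (s.rotate k).getLast? = some x₁ →
      s.rotate (rshift s.length k) = x₁ :: (s.rotate k).dropLast := by
    intro k hlk
    have h2 := rotate_rshift s hs k (hne k)
    rw [List.getLast?_eq_getLast (hne k)] at hlk
    obtain hx := Option.some_injective _ hlk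
    rw [rshift, h2, hx]
  have hdl : ∀ (k : ℕ) (c : A), z ++ [c] <+: s.rotate k →
      z ++ [c] <+: (s.rotate k).dropLast := by
    intro k c hp
    rw [List.dropLast_eq_take]
    rw [List.prefix_take_iff]
    refine ⟨hp, ?_⟩
    rw [List.length_rotate]
    simp
    omega
  have hu' : (x₁ :: z) ++ [a] <+: s.rotate (rshift s.length i) := by
    rw [hshift i hli]
    exact List.cons_prefix_cons.mpr ⟨rfl, hdl i a hui⟩
  have hv' : (x₁ :: z) ++ [b] <+: s.rotate (rshift s.length j) := by
    rw [hshift j hlj]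
    exact List.cons_prefix_cons.mpr ⟨rfl, hdl j b hvj⟩
  have h1 : Prec P (s.rotate i) (s.rotate j) ↔ P z a b :=
    prec_iff P z a b hab _ _ hui hvj
  have h2 : Prec P (s.rotate (rshift s.length i)) (s.rotate (rshift s.length j))
      ↔ P (x₁ :: z) a b := prec_iff P (x₁ :: z) a b hab _ _ hu' hv'
  have h3 : Prec P (s.rotate (rshift s.length j)) (s.rotate (rshift s.length i))
      ↔ P (x₁ :: z) b a := prec_iff P (x₁ :: z) b a (Ne.symm hab) _ _ hv' hu'
  constructor
  · intro h
    rw [h1, h2, h]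
  · intro h
    rw [h1, h3, h]
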